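/- arXiv:1910.05195 — 2 statements merged into one kernel-verified Lean document; each statement's English description precedes it below -/
import Mathlib

section
/- Let μ > 0 and λ ≥ 0, and let P : M₃(ℝ) → M₃(ℝ) be the Saint Venant–Kirchhoff first Piola–Kirchhoff map P(G) = (I + G)·( μ (G + Gᵀ + Gᵀ G) + (λ/2)(2 tr G + ‖G‖²) I ). Then P is differentiable at every G, and its Fréchet derivative satisfies, for every direction A and all i, α ∈ {1,2,3}: (DP(G)[A])_{iα} = Σ_{j,β=1}^{3} c_{iαjβ}(G) A_{jβ}. -/
set_option maxHeartbeats 2000000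


open Matrix BigOperators

attribute [local instance] Matrix.normedAddCommGroup Matrix.normedSpace

/-- Squared Frobenius norm of a real 3×3 matrix. -/
noncomputable def frobSq (A : Matrix (Fin 3) (Fin 3) ℝ) : ℝ := ∑ i, ∑ j, (A i j) ^ 2

/-- Kronecker delta on `Fin 3`, valued in `ℝ`. -/
def kd (i j : Fin 3) : ℝ := if i = j then 1 else 0

/-- Linear part `c^l_{iαjβ}(G)` of the Saint Venant–Kirchhoff elasticity coefficients. -/
noncomputable def cL (μ lam : ℝ) (G : Matrix (Fin 3) (Fin 3) ℝ) (i α j β : Fin 3) : ℝ :=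
  μ * (kd i j * G α β + kd α j * G i β + kd i j * G β α + kd α β * G i j
        + kd i β * G j α + kd α β * G j i)
    + lam * (kd i α * G j β + kd α β * kd i j * Matrix.trace G + kd j β * G i α)

/-- Quadratic part `c^q_{iαjβ}(G)` of the Saint Venant–Kirchhoff elasticity coefficients. -/
noncomputable def cQ (μ lam : ℝ) (G : Matrix (Fin 3) (Fin 3) ℝ) (i α j β : Fin 3) : ℝ :=
  μ * (kd i j * (∑ k, G k β * G k α) + G i β * G j α + kd α β * (∑ k, G j k * G i k))
    + lam * ((1 / 2) * kd i j * kd α β * frobSq G + G i α * G j β)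

/-- The Saint Venant–Kirchhoff elasticity coefficients `c_{iαjβ}(G)`. -/
noncomputable def cSVK (μ lam : ℝ) (G : Matrix (Fin 3) (Fin 3) ℝ) (i α j β : Fin 3) : ℝ :=
  μ * (kd β i * kd α j + kd α β * kd i j) + lam * (kd i α * kd j β)
    + cL μ lam G i α j β + cQ μ lam G i α j β

/-- The Saint Venant–Kirchhoff first Piola–Kirchhoff stress in terms of the
displacement gradient `G`. -/
noncomputable def Psvk (μ lam : ℝ) (G : Matrix (Fin 3) (Fin 3) ℝ) :
    Matrix (Fin 3) (Fin 3) ℝ :=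
  ((1 : Matrix (Fin 3) (Fin 3) ℝ) + G) *
    (μ • (G + Gᵀ + Gᵀ * G) +
      ((lam / 2) * (2 * Matrix.trace G + frobSq G)) • (1 : Matrix (Fin 3) (Fin 3) ℝ))


local notation "M3" => Matrix (Fin 3) (Fin 3) ℝ

noncomputable def mulCLM : M3 →L[ℝ] M3 →L[ℝ] M3 :=
  LinearMap.toContinuousLinearMap
    { toFun := fun X => LinearMap.toContinuousLinearMap (LinearMap.mulLeft ℝ X)
      map_add' := by intro x y; ext A; simp [add_mul]
      map_smul' := by intro c x; ext A; simp [smul_mul_assoc] }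

@[simp] lemma mulCLM_apply (X Y : M3) : mulCLM X Y = X * Y := rfl

noncomputable def transposeCLM : M3 →L[ℝ] M3 :=
  LinearMap.toContinuousLinearMap
    { toFun := fun X : M3 => Xᵀ
      map_add' := fun _ _ => Matrix.transpose_add _ _
      map_smul' := fun _ _ => Matrix.transpose_smul _ _ }

@[simp] lemma transposeCLM_apply (X : M3) : transposeCLM X = Xᵀ := rfl

noncomputable def traceCLM : M3 →L[ℝ] ℝ :=
  LinearMap.toContinuousLinearMap (Matrix.traceLinearMap (Fin 3) ℝ ℝ)

@[simp] lemma traceCLM_apply (X : M3) : traceCLM X = Matrix.trace X := rfl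

noncomputable def entryCLM (i j : Fin 3) : M3 →L[ℝ] ℝ :=
  LinearMap.toContinuousLinearMap
    { toFun := fun A : M3 => A i j
      map_add' := fun _ _ => rfl
      map_smul' := fun _ _ => rfl }

@[simp] lemma entryCLM_apply (i j : Fin 3) (X : M3) : entryCLM i j X = X i j := rfl


/-- `P` is Fréchet differentiable at every `G`, and the components of its derivative
are given by the elasticity coefficients:
`(DP(G)[A])_{iα} = Σ_{j,β} c_{iαjβ}(G) A_{jβ}`. -/
theorem svk_first_piola_derivative (μ lam : ℝ) (hμ : 0 < μ) (hlam : 0 ≤ lam)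
    (G : Matrix (Fin 3) (Fin 3) ℝ) :
    ∃ L : Matrix (Fin 3) (Fin 3) ℝ →L[ℝ] Matrix (Fin 3) (Fin 3) ℝ,
      HasFDerivAt (Psvk μ lam) L G ∧
        ∀ (A : Matrix (Fin 3) (Fin 3) ℝ) (i α : Fin 3),
          L A i α = ∑ j, ∑ β, cSVK μ lam G i α j β * A j β := by
  have hId : HasFDerivAt (fun X : M3 => X) (ContinuousLinearMap.id ℝ M3) G := hasFDerivAt_id G
  have hT : HasFDerivAt (fun X : M3 => Xᵀ) transposeCLM G := transposeCLM.hasFDerivAt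
  have hTr : HasFDerivAt (fun X : M3 => Matrix.trace X) traceCLM G := traceCLM.hasFDerivAt
  have hE : ∀ i j : Fin 3, HasFDerivAt (fun X : M3 => X i j) (entryCLM i j) G :=
    fun i j => (entryCLM i j).hasFDerivAt
  have hsq : ∀ i j : Fin 3, HasFDerivAt (fun X : M3 => X i j ^ 2)
      (G i j • entryCLM i j + G i j • entryCLM i j) G := by
    intro i j
    have h := (hE i j).fun_mul (hE i j); simp only [← sq] at h; exact h
  have hfrob : HasFDerivAt frobSq
      (∑ i, ∑ j, (G i j • entryCLM i j + G i j • entryCLM i j)) G := by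
    exact HasFDerivAt.fun_sum fun i _ => HasFDerivAt.fun_sum fun j _ => hsq i j
  have hc : HasFDerivAt (fun X : M3 => (lam / 2) * (2 * Matrix.trace X + frobSq X))
      ((lam / 2) • ((2:ℝ) • traceCLM
        + ∑ i, ∑ j, (G i j • entryCLM i j + G i j • entryCLM i j))) G :=
    ((hTr.const_mul 2).add hfrob).const_mul (lam / 2)
  have hTG : HasFDerivAt (fun X : M3 => Xᵀ * X)
      (mulCLM.precompR M3 Gᵀ (ContinuousLinearMap.id ℝ M3)
        + mulCLM.precompL M3 transposeCLM G) G :=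
    mulCLM.hasFDerivAt_of_bilinear hT hId
  have h1 :=
    ((hId.add hT).add hTG).const_smul μ
  have h2 : HasFDerivAt
      (fun X : M3 => ((lam / 2) * (2 * Matrix.trace X + frobSq X)) • (1 : M3))
      (((lam / 2) • ((2:ℝ) • traceCLM
        + ∑ i, ∑ j, (G i j • entryCLM i j + G i j • entryCLM i j))).smulRight (1 : M3)) G :=
    hc.smul_const 1
  have hS := h1.add h2
  have hP : HasFDerivAt (Psvk μ lam) _ G :=
    mulCLM.hasFDerivAt_of_bilinear ((hasFDerivAt_id G).const_add (1 : M3)) hS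
  refine ⟨_, hP, ?_⟩
  intro A i α
  change (((1 : M3) + G) * (μ • (A + Aᵀ + (Gᵀ * A + Aᵀ * G))
      + ((lam / 2) * (2 * Matrix.trace A + ∑ i, ∑ j, (G i j * A i j + G i j * A i j))) • (1 : M3))
      + A * (μ • (G + Gᵀ + Gᵀ * G)
      + ((lam / 2) * (2 * Matrix.trace G + frobSq G)) • (1 : M3))) i α = _
  fin_cases i <;> fin_cases α <;>
  · simp [cSVK, cL, cQ, kd, frobSq, Matrix.add_apply, Matrix.mul_apply, Matrix.smul_apply,
      Matrix.one_apply, Matrix.transpose_apply, Matrix.trace_fin_three, Fin.sum_univ_three,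
      smul_eq_mul]
    ring
end

section
/- Let μ > 0 and λ ≥ 0. There exists a constant C > 0, depending only on μ and λ, such that for all real 3×3 matrices G and A: Σ_{i,α,j,β=1}^{3} c_{iαjβ}(G) A_{jβ} A_{iα} ≥ (μ/2) ‖A + Aᵀ‖² + λ (tr A)² − C (‖G‖ + ‖G‖²) ‖A‖². -/
open Matrix BigOperators

/-- Frobenius norm of a real 3×3 matrix. -/
noncomputable def fro (A : Matrix (Fin 3) (Fin 3) ℝ) : ℝ := Real.sqrt (frobSq A)

lemma frobSq_nonneg (A : Matrix (Fin 3) (Fin 3) ℝ) : 0 ≤ frobSq A := by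
  apply Finset.sum_nonneg; intro i _; apply Finset.sum_nonneg; intro j _; positivity

lemma fro_nonneg (A : Matrix (Fin 3) (Fin 3) ℝ) : 0 ≤ fro A := Real.sqrt_nonneg _

lemma sq_fro (A : Matrix (Fin 3) (Fin 3) ℝ) : fro A ^ 2 = frobSq A :=
  Real.sq_sqrt (frobSq_nonneg A)

lemma abs_entry_le (A : Matrix (Fin 3) (Fin 3) ℝ) (i j : Fin 3) : |A i j| ≤ fro A := by
  rw [← Real.sqrt_sq_eq_abs]
  apply Real.sqrt_le_sqrt
  have h1 : (A i j)^2 ≤ ∑ l, (A i l)^2 := by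
    apply Finset.single_le_sum (fun l _ => sq_nonneg (A i l)) (Finset.mem_univ j)
  have h2 : (∑ l, (A i l)^2) ≤ frobSq A := by
    apply Finset.single_le_sum (f := fun k => ∑ l, (A k l)^2)
      (fun k _ => Finset.sum_nonneg fun l _ => sq_nonneg _) (Finset.mem_univ i)
  linarith

lemma abs_prod_le (G : Matrix (Fin 3) (Fin 3) ℝ) (i j k l : Fin 3) :
    |G i j * G k l| ≤ frobSq G := by
  rw [abs_mul]
  calc |G i j| * |G k l| ≤ fro G * fro G :=
        mul_le_mul (abs_entry_le G i j) (abs_entry_le G k l) (abs_nonneg _) (fro_nonneg G)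
    _ = frobSq G := by rw [← sq_fro]; ring
lemma abs_kd_mul (i j : Fin 3) (x : ℝ) : |kd i j * x| ≤ |x| := by
  unfold kd; split <;> simp [abs_nonneg]

lemma abs_trace_le (G : Matrix (Fin 3) (Fin 3) ℝ) : |Matrix.trace G| ≤ 3 * fro G := by
  have h0 := abs_entry_le G 0 0
  have h1 := abs_entry_le G 1 1
  have h2 := abs_entry_le G 2 2
  have : Matrix.trace G = G 0 0 + G 1 1 + G 2 2 := by
    simp [Matrix.trace, Fin.sum_univ_three, Matrix.diag]
  rw [this]
  calc |G 0 0 + G 1 1 + G 2 2| ≤ |G 0 0| + |G 1 1| + |G 2 2| := abs_add_three _ _ _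
    _ ≤ 3 * fro G := by linarith

lemma abs_sum_prod_le (G : Matrix (Fin 3) (Fin 3) ℝ) (f g : Fin 3 → ℝ)
    (hf : ∀ k, |f k * g k| ≤ frobSq G) : |∑ k, f k * g k| ≤ 3 * frobSq G := by
  rw [Fin.sum_univ_three]
  calc |f 0 * g 0 + f 1 * g 1 + f 2 * g 2| ≤ |f 0 * g 0| + |f 1 * g 1| + |f 2 * g 2| :=
        abs_add_three _ _ _
    _ ≤ 3 * frobSq G := by have := hf 0; have := hf 1; have := hf 2; linarith

lemma abs_add6 (a b c d e f : ℝ) : |a+b+c+d+e+f| ≤ |a|+|b|+|c|+|d|+|e|+|f| := by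
  calc |a+b+c+d+e+f| ≤ |a+b+c+d+e| + |f| := abs_add_le _ _
    _ ≤ |a+b+c+d| + |e| + |f| := by have := abs_add_le (a+b+c+d) e; linarith
    _ ≤ |a+b+c| + |d| + |e| + |f| := by have := abs_add_le (a+b+c) d; linarith
    _ ≤ |a|+|b|+|c|+|d|+|e|+|f| := by have := abs_add_three a b c; linarith

lemma cL_bound (μ lam : ℝ) (hμ : 0 ≤ μ) (hlam : 0 ≤ lam) (G : Matrix (Fin 3) (Fin 3) ℝ)
    (i α j β : Fin 3) : |cL μ lam G i α j β| ≤ (6*μ + 5*lam) * fro G := by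
  unfold cL
  have hX : |kd i j * G α β + kd α j * G i β + kd i j * G β α + kd α β * G i j
      + kd i β * G j α + kd α β * G j i| ≤ 6 * fro G := by
    have b1 := (abs_kd_mul i j (G α β)).trans (abs_entry_le G α β)
    have b2 := (abs_kd_mul α j (G i β)).trans (abs_entry_le G i β)
    have b3 := (abs_kd_mul i j (G β α)).trans (abs_entry_le G β α)
    have b4 := (abs_kd_mul α β (G i j)).trans (abs_entry_le G i j)
    have b5 := (abs_kd_mul i β (G j α)).trans (abs_entry_le G j α)
    have b6 := (abs_kd_mul α β (G j i)).trans (abs_entry_le G j i)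
    have := abs_add6 (kd i j * G α β) (kd α j * G i β) (kd i j * G β α) (kd α β * G i j)
      (kd i β * G j α) (kd α β * G j i)
    linarith
  have hY : |kd i α * G j β + kd α β * kd i j * Matrix.trace G + kd j β * G i α|
      ≤ 5 * fro G := by
    have b1 := (abs_kd_mul i α (G j β)).trans (abs_entry_le G j β)
    have b2 : |kd α β * kd i j * Matrix.trace G| ≤ 3 * fro G := by
      rw [mul_assoc]
      exact (abs_kd_mul α β _).trans ((abs_kd_mul i j _).trans (abs_trace_le G))
    have b3 := (abs_kd_mul j β (G i α)).trans (abs_entry_le G i α)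
    have := abs_add_three (kd i α * G j β) (kd α β * kd i j * Matrix.trace G) (kd j β * G i α)
    linarith
  have h1 := mul_le_mul_of_nonneg_left hX hμ
  have h2 := mul_le_mul_of_nonneg_left hY hlam
  have h3 := (abs_add_le _ _).trans (by
    rw [abs_mul, abs_mul, abs_of_nonneg hμ, abs_of_nonneg hlam] : |μ * (kd i j * G α β + kd α j * G i β + kd i j * G β α + kd α β * G i j
        + kd i β * G j α + kd α β * G j i)|
      + |lam * (kd i α * G j β + kd α β * kd i j * Matrix.trace G + kd j β * G i α)|
      ≤ μ * |kd i j * G α β + kd α j * G i β + kd i j * G β α + kd α β * G i j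
        + kd i β * G j α + kd α β * G j i|
      + lam * |kd i α * G j β + kd α β * kd i j * Matrix.trace G + kd j β * G i α|)
  linarith

lemma cQ_bound (μ lam : ℝ) (hμ : 0 ≤ μ) (hlam : 0 ≤ lam) (G : Matrix (Fin 3) (Fin 3) ℝ)
    (i α j β : Fin 3) : |cQ μ lam G i α j β| ≤ (7*μ + 3*lam) * frobSq G := by
  unfold cQ
  have hX : |kd i j * (∑ k, G k β * G k α) + G i β * G j α + kd α β * (∑ k, G j k * G i k)|
      ≤ 7 * frobSq G := by
    have b1 : |kd i j * (∑ k, G k β * G k α)| ≤ 3 * frobSq G :=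
      (abs_kd_mul i j _).trans (abs_sum_prod_le G _ _ (fun k => abs_prod_le G k β k α))
    have b2 := abs_prod_le G i β j α
    have b3 : |kd α β * (∑ k, G j k * G i k)| ≤ 3 * frobSq G :=
      (abs_kd_mul α β _).trans (abs_sum_prod_le G _ _ (fun k => abs_prod_le G j k i k))
    have := abs_add_three (kd i j * (∑ k, G k β * G k α)) (G i β * G j α)
      (kd α β * (∑ k, G j k * G i k))
    linarith
  have hY : |(1 / 2) * kd i j * kd α β * frobSq G + G i α * G j β| ≤ 3 * frobSq G := by
    have b1 : |(1 / 2) * kd i j * kd α β * frobSq G| ≤ frobSq G := by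
      have h : |(1 / 2) * (kd i j * (kd α β * frobSq G))| ≤ frobSq G := by
        rw [abs_mul]
        have := (abs_kd_mul i j (kd α β * frobSq G)).trans (abs_kd_mul α β (frobSq G))
        rw [abs_of_nonneg (frobSq_nonneg G)] at this
        rw [abs_of_nonneg (by norm_num : (0:ℝ) ≤ 1/2)]
        nlinarith [frobSq_nonneg G, abs_nonneg (kd i j * (kd α β * frobSq G))]
      calc |(1 / 2) * kd i j * kd α β * frobSq G|
          = |(1 / 2) * (kd i j * (kd α β * frobSq G))| := by ring_nf
        _ ≤ frobSq G := h
    have b2 := abs_prod_le G i α j β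
    have := abs_add_le ((1 / 2) * kd i j * kd α β * frobSq G) (G i α * G j β)
    have := frobSq_nonneg G
    linarith
  have h1 := mul_le_mul_of_nonneg_left hX hμ
  have h2 := mul_le_mul_of_nonneg_left hY hlam
  have h3 := (abs_add_le _ _).trans (by
    rw [abs_mul, abs_mul, abs_of_nonneg hμ, abs_of_nonneg hlam] : |μ * (kd i j * (∑ k, G k β * G k α) + G i β * G j α + kd α β * (∑ k, G j k * G i k))|
      + |lam * ((1 / 2) * kd i j * kd α β * frobSq G + G i α * G j β)|
      ≤ μ * |kd i j * (∑ k, G k β * G k α) + G i β * G j α + kd α β * (∑ k, G j k * G i k)|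
      + lam * |(1 / 2) * kd i j * kd α β * frobSq G + G i α * G j β|)
  linarith

lemma const_sum (μ lam : ℝ) (A : Matrix (Fin 3) (Fin 3) ℝ) :
    ∑ i, ∑ α, ∑ j, ∑ β, (μ * (kd β i * kd α j + kd α β * kd i j) + lam * (kd i α * kd j β))
        * A j β * A i α
      = (μ / 2) * frobSq (A + Aᵀ) + lam * (Matrix.trace A) ^ 2 := by
  simp [Fin.sum_univ_three, kd, Matrix.trace, Matrix.diag, frobSq, Matrix.add_apply,
    Matrix.transpose_apply]
  ring

lemma sum4_ge {f : Fin 3 → Fin 3 → Fin 3 → Fin 3 → ℝ} {c : ℝ}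
    (h : ∀ i α j β, c ≤ f i α j β) : 81 * c ≤ ∑ i, ∑ α, ∑ j, ∑ β, f i α j β := by
  calc 81 * c = ∑ _i : Fin 3, ∑ _α : Fin 3, ∑ _j : Fin 3, ∑ _β : Fin 3, c := by
        simp [Finset.sum_const]; ring
    _ ≤ _ := Finset.sum_le_sum fun i _ => Finset.sum_le_sum fun α _ =>
        Finset.sum_le_sum fun j _ => Finset.sum_le_sum fun β _ => h i α j β

/-- Coercivity of the Saint Venant–Kirchhoff coefficients:
`Σ c_{iαjβ}(G) A_{jβ} A_{iα} ≥ (μ/2)‖A+Aᵀ‖² + λ(tr A)² − C(‖G‖+‖G‖²)‖A‖²`. -/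
theorem svk_coercivity (μ lam : ℝ) (hμ : 0 < μ) (hlam : 0 ≤ lam) :
    ∃ C : ℝ, 0 < C ∧ ∀ G A : Matrix (Fin 3) (Fin 3) ℝ,
      ∑ i, ∑ α, ∑ j, ∑ β, cSVK μ lam G i α j β * A j β * A i α
        ≥ (μ / 2) * frobSq (A + Aᵀ) + lam * (Matrix.trace A) ^ 2
            - C * (fro G + (fro G) ^ 2) * frobSq A := by

  refine ⟨81 * (7 * μ + 5 * lam), by nlinarith, fun G A => ?_⟩
  set g := fro G with hgdef
  have hg : 0 ≤ g := fro_nonneg G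
  have hG2 : frobSq G = g ^ 2 := (sq_fro G).symm
  have hA : 0 ≤ frobSq A := frobSq_nonneg A
  set M : ℝ := (6 * μ + 5 * lam) * g + (7 * μ + 3 * lam) * g ^ 2 with hMdef
  have hsplit : ∑ i, ∑ α, ∑ j, ∑ β, cSVK μ lam G i α j β * A j β * A i α
      = (∑ i, ∑ α, ∑ j, ∑ β,
          (μ * (kd β i * kd α j + kd α β * kd i j) + lam * (kd i α * kd j β))
            * A j β * A i α)
        + ∑ i, ∑ α, ∑ j, ∑ β,
            (cL μ lam G i α j β + cQ μ lam G i α j β) * A j β * A i α := by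
    rw [← Finset.sum_add_distrib]
    refine Finset.sum_congr rfl fun i _ => ?_
    rw [← Finset.sum_add_distrib]
    refine Finset.sum_congr rfl fun α _ => ?_
    rw [← Finset.sum_add_distrib]
    refine Finset.sum_congr rfl fun j _ => ?_
    rw [← Finset.sum_add_distrib]
    refine Finset.sum_congr rfl fun β _ => ?_
    unfold cSVK; ring
  have hterm : ∀ i α j β : Fin 3, -(M * frobSq A)
      ≤ (cL μ lam G i α j β + cQ μ lam G i α j β) * A j β * A i α := by
    intro i α j β
    have hc : |cL μ lam G i α j β + cQ μ lam G i α j β| ≤ M := by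
      have h1 := cL_bound μ lam hμ.le hlam G i α j β
      have h2 := cQ_bound μ lam hμ.le hlam G i α j β
      have h3 := abs_add_le (cL μ lam G i α j β) (cQ μ lam G i α j β)
      rw [hG2] at h2
      rw [hMdef]; rw [hgdef] at *; linarith
    have hp : |A j β * A i α| ≤ frobSq A := abs_prod_le A j β i α
    have habs : |(cL μ lam G i α j β + cQ μ lam G i α j β) * A j β * A i α| ≤ M * frobSq A := by
      rw [mul_assoc, abs_mul]
      exact mul_le_mul hc hp (abs_nonneg _) ((abs_nonneg _).trans hc)
    linarith [neg_abs_le ((cL μ lam G i α j β + cQ μ lam G i α j β) * A j β * A i α)]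
  have hrest : 81 * (-(M * frobSq A))
      ≤ ∑ i, ∑ α, ∑ j, ∑ β, (cL μ lam G i α j β + cQ μ lam G i α j β) * A j β * A i α :=
    sum4_ge hterm
  have hC : 81 * M ≤ 81 * (7 * μ + 5 * lam) * (g + g ^ 2) := by
    rw [hMdef]
    nlinarith [mul_nonneg hμ.le hg, mul_nonneg hlam hg,
      mul_nonneg hμ.le (sq_nonneg g), mul_nonneg hlam (sq_nonneg g)]
  have hC2 : 81 * M * frobSq A ≤ 81 * (7 * μ + 5 * lam) * (g + g ^ 2) * frobSq A :=
    mul_le_mul_of_nonneg_right hC hA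
  rw [ge_iff_le, hsplit, const_sum μ lam A]
  linarith
end
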